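/- For all integers s, r ≥ 1 and any two distinct terminals x and x' of the graph Q_{s,r}, there exist s paths in Q_{s,r} from x to x' that are internally vertex-disjoint, i.e., pairwise share no vertices other than x and x'. -/

import Mathlib

/-- The graph `Q_{s,r}`: the `(s × (s·r))`-grid together with `2r` terminal vertices
`t_i, t_i'` (encoded as `(i, 0)` and `(i, 1)`), where for each `i` both `t_i` and `t_i'`
are joined to the `i`-th block of `s` consecutive vertices of the first row. -/
def Qgraph (s r : ℕ) : SimpleGraph ((Fin s × Fin (s * r)) ⊕ (Fin r × Fin 2)) :=
  SimpleGraph.fromRel fun x y =>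
    match x, y with
    | Sum.inl a, Sum.inl b =>
        (a.1 = b.1 ∧ (b.2 : ℕ) = (a.2 : ℕ) + 1) ∨ (a.2 = b.2 ∧ (b.1 : ℕ) = (a.1 : ℕ) + 1)
    | Sum.inr u, Sum.inl a =>
        (a.1 : ℕ) = 0 ∧ (u.1 : ℕ) * s ≤ (a.2 : ℕ) ∧ (a.2 : ℕ) < (u.1 : ℕ) * s + s
    | _, _ => False

namespace QAux

variable {s r : ℕ}

/-- grid vertex, total in `m c` via mod. -/
def gv (s r : ℕ) (hs : 0 < s) (hsr : 0 < s * r) (m c : ℕ) :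
    (Fin s × Fin (s * r)) ⊕ (Fin r × Fin 2) :=
  Sum.inl (⟨m % s, Nat.mod_lt _ hs⟩, ⟨c % (s * r), Nat.mod_lt _ hsr⟩)

variable (hs : 0 < s) (hsr : 0 < s * r)

lemma gv_inj {m m' c c' : ℕ} (hm : m < s) (hm' : m' < s) (hc : c < s * r) (hc' : c' < s * r) :
    gv s r hs hsr m c = gv s r hs hsr m' c' ↔ m = m' ∧ c = c' := by
  simp [gv, Prod.ext_iff, Fin.ext_iff, Nat.mod_eq_of_lt, hm, hm', hc, hc']

lemma adj_right {j c : ℕ} (hj : j < s) (hc : c + 1 < s * r) :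
    (Qgraph s r).Adj (gv s r hs hsr j c) (gv s r hs hsr j (c + 1)) := by
  have hc0 : c < s * r := by omega
  constructor
  · simp [gv, Fin.ext_iff, Nat.mod_eq_of_lt, hc, hc0]
  · left; left
    simp [gv, Fin.ext_iff, Nat.mod_eq_of_lt, hc, hc0]

lemma adj_down {j c : ℕ} (hj : j + 1 < s) (hc : c < s * r) :
    (Qgraph s r).Adj (gv s r hs hsr j c) (gv s r hs hsr (j + 1) c) := by
  have hj0 : j < s := by omega
  constructor
  · simp [gv, Fin.ext_iff, Nat.mod_eq_of_lt, hj, hj0]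
  · left; right
    simp [gv, Fin.ext_iff, Nat.mod_eq_of_lt, hj, hj0]

lemma adj_term (u : Fin r × Fin 2) {c : ℕ} (h1 : (u.1 : ℕ) * s ≤ c)
    (h2 : c < (u.1 : ℕ) * s + s) : (Qgraph s r).Adj (Sum.inr u) (gv s r hs hsr 0 c) := by
  have hcr : c < s * r := by
    have h3 : (u.1 : ℕ) * s + s ≤ r * s := by
      have := u.1.isLt
      calc (u.1 : ℕ) * s + s = ((u.1 : ℕ) + 1) * s := by ring
      _ ≤ r * s := Nat.mul_le_mul_right s (by omega)
    rw [mul_comm]; omega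
  constructor
  · simp [gv]
  · left
    simp [gv, Nat.mod_eq_of_lt, hcr, hs, h1, h2]

/-- Walk going down a column from row 0 to row j. -/
def down (hs : 0 < s) (hsr : 0 < s * r) (c : ℕ) (hc : c < s * r) :
    (j : ℕ) → j < s → (Qgraph s r).Walk (gv s r hs hsr 0 c) (gv s r hs hsr j c)
  | 0, _ => SimpleGraph.Walk.nil
  | j + 1, hj => (down hs hsr c hc j (by omega)).concat (adj_down hs hsr hj hc)

lemma support_down (c : ℕ) (hc : c < s * r) (j : ℕ) (hj : j < s) :
    (down hs hsr c hc j hj).support = (List.range (j + 1)).map (fun m => gv s r hs hsr m c) := by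
  induction j with
  | zero => simp [down, List.range_succ]
  | succ j ih =>
      rw [down, SimpleGraph.Walk.support_concat, ih (by omega), List.range_succ (n := j + 1)]
      simp

/-- Walk going right along row j from column c to column c+d. -/
def right (hs : 0 < s) (hsr : 0 < s * r) (j : ℕ) (hj : j < s) (c : ℕ) :
    (d : ℕ) → c + d < s * r → (Qgraph s r).Walk (gv s r hs hsr j c) (gv s r hs hsr j (c + d))
  | 0, _ => SimpleGraph.Walk.nil.copy rfl (by rw [Nat.add_zero])
  | d + 1, hd => (right hs hsr j hj c d (by omega)).concat
      (by have := adj_right hs hsr (j := j) (c := c + d) hj (by omega); rwa [Nat.add_assoc] at this)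

lemma support_right (j : ℕ) (hj : j < s) (c d : ℕ) (hd : c + d < s * r) :
    (right hs hsr j hj c d hd).support
      = (List.range (d + 1)).map (fun m => gv s r hs hsr j (c + m)) := by
  induction d with
  | zero => simp [right, List.range_succ]
  | succ d ih =>
      rw [right, SimpleGraph.Walk.support_concat, ih (by omega), List.range_succ (n := d + 1)]
      simp

/-- The support list of the `k`-th cross path. -/
def crossList (hs : 0 < s) (hsr : 0 < s * r) (x x' : Fin r × Fin 2) (A B k : ℕ) :
    List ((Fin s × Fin (s * r)) ⊕ (Fin r × Fin 2)) :=
  Sum.inr x :: ((List.range (s - 1 - k + 1)).map (fun m => gv s r hs hsr m (A + k))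
     ++ (List.range (B + (s - 1 - k) - (A + k))).map
          (fun m => gv s r hs hsr (s - 1 - k) (A + k + m + 1))
     ++ ((List.range (s - 1 - k)).map (fun m => gv s r hs hsr m (B + (s - 1 - k)))).reverse
     ++ [Sum.inr x'])

lemma cross_exists (x x' : Fin r × Fin 2) (A B : ℕ) (hA : A = (x.1 : ℕ) * s)
    (hB : B = (x'.1 : ℕ) * s) (hAB : A + s ≤ B) (hBr : B + s ≤ s * r)
    (k : ℕ) (hk : k < s) :
    ∃ W : (Qgraph s r).Walk (Sum.inr x) (Sum.inr x'),
      W.support = crossList hs hsr x x' A B k := by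
  set h := s - 1 - k with hh
  set c₁ := A + k with hc₁
  set c₂ := B + h with hc₂
  have hhs : h < s := by omega
  have hc₁r : c₁ < s * r := by omega
  have hc₂r : c₂ < s * r := by omega
  have hD : c₁ + (c₂ - c₁) = c₂ := by omega
  have hDr : c₁ + (c₂ - c₁) < s * r := by omega
  have a₁ : (Qgraph s r).Adj (Sum.inr x) (gv s r hs hsr 0 c₁) :=
    adj_term hs hsr x (by omega) (by omega)
  have a₂ : (Qgraph s r).Adj (gv s r hs hsr 0 c₂) (Sum.inr x') :=
    (adj_term hs hsr x' (by omega) (by omega)).symm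
  refine ⟨(SimpleGraph.Walk.cons a₁ (down hs hsr c₁ hc₁r h hhs)).append
    (((right hs hsr h hhs c₁ (c₂ - c₁) hDr).copy rfl (by rw [hD])).append
      ((down hs hsr c₂ hc₂r h hhs).reverse.concat a₂)), ?_⟩
  rw [SimpleGraph.Walk.support_append, SimpleGraph.Walk.tail_support_append,
    SimpleGraph.Walk.support_copy, SimpleGraph.Walk.support_cons,
    SimpleGraph.Walk.support_concat, SimpleGraph.Walk.support_reverse,
    support_down, support_down, support_right, crossList]
  have t1 : ((List.range (c₂ - c₁ + 1)).map (fun m => gv s r hs hsr h (c₁ + m))).tail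
      = (List.range (c₂ - c₁)).map (fun m => gv s r hs hsr h (c₁ + m + 1)) := by
    rw [List.range_succ_eq_map]
    simp [List.map_map, Function.comp, Nat.add_comm, Nat.add_assoc, Nat.add_left_comm]
  have t2 : (((List.range (h + 1)).map (fun m => gv s r hs hsr m c₂)).reverse
        ++ [Sum.inr x']).tail
      = ((List.range h).map (fun m => gv s r hs hsr m c₂)).reverse ++ [Sum.inr x'] := by
    rw [List.range_succ, List.map_append, List.reverse_append]
    simp
  rw [t1, t2]
  simp
  rfl

lemma gv_ne_inr {m c : ℕ} (y : Fin r × Fin 2) : gv s r hs hsr m c ≠ Sum.inr y := by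
  simp [gv]

lemma crossList_nodup (x x' : Fin r × Fin 2) (A B : ℕ) (hAB : A + s ≤ B)
    (hBr : B + s ≤ s * r) (k : ℕ) (hk : k < s) (hxx : x ≠ x') :
    (crossList hs hsr x x' A B k).Nodup := by
  rw [crossList]
  simp only [List.nodup_cons, List.nodup_append, List.mem_append, List.nodup_reverse,
    List.mem_reverse, List.disjoint_append_right, List.mem_map, List.mem_range,
    List.mem_singleton, List.mem_cons, List.nodup_singleton, List.disjoint_singleton,
    List.mem_reverse, List.disjoint_reverse_right]
  refine ⟨?g1, ⟨⟨?g2, ?g3, ?g4⟩, ?g5, ?g6⟩, ⟨?g7, ?g8⟩, ?g9⟩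
  case g1 => simp [gv_ne_inr, hxx]
  case g9 => simp [gv_ne_inr]
  case g7 => simp
  case g8 => simp
  case g2 =>
    refine List.Nodup.map_on ?_ List.nodup_range
    intro m hm m' hm' heq
    simp only [List.mem_range] at hm hm'
    rw [gv_inj hs hsr (by omega) (by omega) (by omega) (by omega)] at heq
    omega
  case g3 =>
    refine List.Nodup.map_on ?_ List.nodup_range
    intro m hm m' hm' heq
    simp only [List.mem_range] at hm hm'
    rw [gv_inj hs hsr (by omega) (by omega) (by omega) (by omega)] at heq
    omega
  case g5 =>
    refine List.Nodup.map_on ?_ List.nodup_range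
    intro m hm m' hm' heq
    simp only [List.mem_range] at hm hm'
    rw [gv_inj hs hsr (by omega) (by omega) (by omega) (by omega)] at heq
    omega
  case g4 =>
    intro a ha b hb
    obtain ⟨m, hm, rfl⟩ := ha
    obtain ⟨m', hm', rfl⟩ := hb
    intro heq
    rw [gv_inj hs hsr (by omega) (by omega) (by omega) (by omega)] at heq
    omega
  case g6 =>
    intro a ha b hb
    obtain ⟨m', hm', rfl⟩ := hb
    rcases ha with ⟨m, hm, rfl⟩ | ⟨m, hm, rfl⟩ <;> intro heq <;>
      rw [gv_inj hs hsr (by omega) (by omega) (by omega) (by omega)] at heq <;> omega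

lemma crossList_inter (x x' : Fin r × Fin 2) (A B : ℕ) (hAB : A + s ≤ B)
    (hBr : B + s ≤ s * r) {k k' : ℕ} (hk : k < s) (hk' : k' < s) (hne : k ≠ k')
    (v) (h1 : v ∈ crossList hs hsr x x' A B k) (h2 : v ∈ crossList hs hsr x x' A B k') :
    v = Sum.inr x ∨ v = Sum.inr x' := by
  simp only [crossList, List.mem_cons, List.mem_append, List.mem_map, List.mem_range,
    List.mem_reverse, List.mem_singleton, List.mem_nil_iff, or_false] at h1 h2
  rcases h1 with rfl | h1
  · exact Or.inl rfl
  rcases h2 with rfl | h2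
  · exact Or.inl rfl
  rcases h1 with h1 | rfl
  swap
  · exact Or.inr rfl
  rcases h2 with h2 | rfl
  swap
  · exact Or.inr rfl
  exfalso
  rcases h1 with (⟨m, hm, rfl⟩ | ⟨m, hm, rfl⟩) | ⟨m, hm, rfl⟩ <;>
    rcases h2 with (⟨n, hn, heq⟩ | ⟨n, hn, heq⟩) | ⟨n, hn, heq⟩ <;>
    (rw [gv_inj hs hsr (by omega) (by omega) (by omega) (by omega)] at heq; omega)

lemma cross_main {s r : ℕ} (hs : 0 < s) (hsr : 0 < s * r) (x x' : Fin r × Fin 2)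
    (hlt : (x.1 : ℕ) < (x'.1 : ℕ)) :
    ∃ P : Fin s → (Qgraph s r).Walk (Sum.inr x) (Sum.inr x'),
      (∀ i : Fin s, (P i).IsPath) ∧
      (∀ i j : Fin s, i ≠ j → ∀ v, v ∈ (P i).support → v ∈ (P j).support →
        v = Sum.inr x ∨ v = Sum.inr x') := by
  have hxx : x ≠ x' := by
    intro h; rw [h] at hlt; omega
  have hAB : (x.1 : ℕ) * s + s ≤ (x'.1 : ℕ) * s := by
    calc (x.1 : ℕ) * s + s = ((x.1 : ℕ) + 1) * s := by ring
    _ ≤ (x'.1 : ℕ) * s := Nat.mul_le_mul_right s (by omega)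
  have hBr : (x'.1 : ℕ) * s + s ≤ s * r := by
    have := x'.1.isLt
    calc (x'.1 : ℕ) * s + s = ((x'.1 : ℕ) + 1) * s := by ring
    _ ≤ r * s := Nat.mul_le_mul_right s (by omega)
    _ = s * r := mul_comm r s
  choose W hW using fun i : Fin s =>
    cross_exists hs hsr x x' _ _ rfl rfl hAB hBr i.val i.isLt
  refine ⟨W, fun i => ?_, fun i j hij v hvi hvj => ?_⟩
  · rw [SimpleGraph.Walk.isPath_def, hW i]
    exact crossList_nodup hs hsr x x' _ _ hAB hBr i.val i.isLt hxx
  · rw [hW i] at hvi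
    rw [hW j] at hvj
    exact crossList_inter hs hsr x x' _ _ hAB hBr i.isLt j.isLt
      (fun h => hij (Fin.ext h)) v hvi hvj

lemma same_main {s r : ℕ} (hs : 0 < s) (hsr : 0 < s * r) (x x' : Fin r × Fin 2)
    (heq : (x.1 : ℕ) = (x'.1 : ℕ)) (hxx : x ≠ x') :
    ∃ P : Fin s → (Qgraph s r).Walk (Sum.inr x) (Sum.inr x'),
      (∀ i : Fin s, (P i).IsPath) ∧
      (∀ i j : Fin s, i ≠ j → ∀ v, v ∈ (P i).support → v ∈ (P j).support →
        v = Sum.inr x ∨ v = Sum.inr x') := by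
  have hcb : (x.1 : ℕ) * s + s ≤ s * r := by
    have := x.1.isLt
    calc (x.1 : ℕ) * s + s = ((x.1 : ℕ) + 1) * s := by ring
    _ ≤ r * s := Nat.mul_le_mul_right s (by omega)
    _ = s * r := mul_comm r s
  have hadj : ∀ k : Fin s, (Qgraph s r).Adj (Sum.inr x') (gv s r hs hsr 0 ((x.1 : ℕ) * s + k)) := by
    intro k
    exact adj_term hs hsr x' (by rw [← heq]; omega) (by rw [← heq]; have := k.isLt; omega)
  refine ⟨fun k => SimpleGraph.Walk.cons
      (adj_term hs hsr x (by omega) (by have := k.isLt; omega))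
      (SimpleGraph.Walk.cons (hadj k).symm SimpleGraph.Walk.nil), fun i => ?_, ?_⟩
  · simp [SimpleGraph.Walk.isPath_def, gv_ne_inr, (gv_ne_inr hs hsr x).symm, hxx,
      Ne.symm (gv_ne_inr hs hsr x), Ne.symm (gv_ne_inr hs hsr x')]
  · intro i j hij v hvi hvj
    simp only [SimpleGraph.Walk.support_cons, SimpleGraph.Walk.support_nil,
      List.mem_cons, List.mem_nil_iff, or_false] at hvi hvj
    rcases hvi with rfl | rfl | rfl
    · exact Or.inl rfl
    · rcases hvj with h | h | h
      · exact Or.inl h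
      · exfalso
        rw [gv_inj hs hsr (by omega) (by omega) (by have := i.isLt; omega)
          (by have := j.isLt; omega)] at h
        exact hij (Fin.ext (by omega))
      · exact Or.inr h
    · exact Or.inr rfl

end QAux

/-- For all `s, r ≥ 1` and any two distinct terminals `x`, `x'` of `Q_{s,r}`, there are
`s` paths from `x` to `x'` in `Q_{s,r}` that pairwise share no vertices other than
`x` and `x'`. -/
theorem Qgraph_terminals_internally_disjoint_paths (s r : ℕ) (hs : 1 ≤ s) (hr : 1 ≤ r)
    (x x' : Fin r × Fin 2) (hxx : x ≠ x') :
    ∃ P : Fin s → (Qgraph s r).Walk (Sum.inr x) (Sum.inr x'),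
      (∀ i : Fin s, (P i).IsPath) ∧
      (∀ i j : Fin s, i ≠ j → ∀ v, v ∈ (P i).support → v ∈ (P j).support →
        v = Sum.inr x ∨ v = Sum.inr x') := by
  have hs0 : 0 < s := hs
  have hsr : 0 < s * r := Nat.mul_pos hs hr
  rcases Nat.lt_trichotomy (x.1 : ℕ) (x'.1 : ℕ) with h | h | h
  · exact QAux.cross_main hs0 hsr x x' h
  · exact QAux.same_main hs0 hsr x x' h hxx
  · obtain ⟨P, hp, hd⟩ := QAux.cross_main hs0 hsr x' x h
    refine ⟨fun i => (P i).reverse, fun i => (hp i).reverse, fun i j hij v hvi hvj => ?_⟩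
    rw [SimpleGraph.Walk.support_reverse, List.mem_reverse] at hvi hvj
    exact (hd i j hij v hvi hvj).symm
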